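/- arXiv:2407.12311 — 2 statements merged into one kernel-verified Lean document; each statement's English description precedes it below -/
import Mathlib

section
/- Let {Uⁿ}_{n=0}^N be a CNFD solution. Then the discrete solution is bounded in the discrete L²-norm: ‖Uⁿ‖²_{2,h} ≤ ‖U⁰‖²_{2,h} for every n = 1, …, N. -/
noncomputable section

open Finset Complex ComplexConjugate

/-- Membership in the space `X_JK`: complex arrays vanishing on the boundary of the grid. -/
def memX (J K : ℕ) (u : ℕ → ℕ → ℂ) : Prop :=
  (∀ k, u 0 k = 0) ∧ (∀ k, u J k = 0) ∧ (∀ j, u j 0 = 0) ∧ (∀ j, u j K = 0)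

/-- `normP Δx Δy J K p u = ‖u‖_{p,h}^p`. -/
def normP (Δx Δy : ℝ) (J K : ℕ) (p : ℕ) (u : ℕ → ℕ → ℂ) : ℝ :=
  Δx * Δy * ∑ j ∈ range J, ∑ k ∈ range K, ‖u j k‖ ^ p

/-- `gradSq Δx Δy J K u = ‖δ⁺u‖²_{2,h}`. -/
def gradSq (Δx Δy : ℝ) (J K : ℕ) (u : ℕ → ℕ → ℂ) : ℝ :=
  Δx * Δy * ∑ j ∈ range J, ∑ k ∈ range K,
    (‖(u (j + 1) k - u j k) / (Δx : ℂ)‖ ^ 2 +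
      ‖(u j (k + 1) - u j k) / (Δy : ℂ)‖ ^ 2)

/-- The discrete energy `E_h(u)`. -/
def energy (Δx Δy : ℝ) (J K : ℕ) (lam ν : ℝ) (u : ℕ → ℕ → ℂ) : ℝ :=
  gradSq Δx Δy J K u - lam / 2 * normP Δx Δy J K 4 u + ν / 3 * normP Δx Δy J K 6 u

/-- The discrete Laplacian `δ² = δ²_x + δ²_y` (at interior indices). -/
def delta2 (Δx Δy : ℝ) (u : ℕ → ℕ → ℂ) (j k : ℕ) : ℂ :=
  (u (j + 1) k - 2 * u j k + u (j - 1) k) / (Δx : ℂ) ^ 2 +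
    (u j (k + 1) - 2 * u j k + u j (k - 1)) / (Δy : ℂ) ^ 2

/-- `ψ₁(z,w) = ((|z|² + |w|²)/2)·((z+w)/2)`. -/
def psi1 (z w : ℂ) : ℂ :=
  (((‖z‖ ^ 2 + ‖w‖ ^ 2) / 2 : ℝ) : ℂ) * ((z + w) / 2)

/-- `ψ₂(z,w) = ((|z|⁴ + |z|²|w|² + |w|⁴)/3)·((z+w)/2)`. -/
def psi2 (z w : ℂ) : ℂ :=
  (((‖z‖ ^ 4 + ‖z‖ ^ 2 * ‖w‖ ^ 2 + ‖w‖ ^ 4) / 3 : ℝ) : ℂ) *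
    ((z + w) / 2)

/-- `φ(z,w) = |(z+w)/2|²·((z+w)/2)`. -/
def phi (z w : ℂ) : ℂ :=
  ((‖(z + w) / 2‖ ^ 2 : ℝ) : ℂ) * ((z + w) / 2)

/-- One Crank–Nicolson step equation: `W` is the next level, `V` the current one. -/
def stepEq (Δx Δy : ℝ) (J K : ℕ) (lam ν ε τ : ℝ) (W V : ℕ → ℕ → ℂ) : Prop :=
  ∀ j k : ℕ, 1 ≤ j → j ≤ J - 1 → 1 ≤ k → k ≤ K - 1 →
    Complex.I * (W j k - V j k) / (τ : ℂ) +
      delta2 Δx Δy (fun j' k' => (W j' k' + V j' k') / 2) j k +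
      (lam : ℂ) * psi1 (W j k) (V j k) - (ν : ℂ) * psi2 (W j k) (V j k) +
      Complex.I * (ε : ℂ) * phi (W j k) (V j k) = 0

/-- A CNFD solution `U⁰, …, U^N`. -/
def isCNFD (Δx Δy : ℝ) (J K : ℕ) (lam ν ε τ : ℝ) (N : ℕ) (U : ℕ → ℕ → ℕ → ℂ) : Prop :=
  (∀ n, n ≤ N → memX J K (U n)) ∧
    ∀ n, n < N → stepEq Δx Δy J K lam ν ε τ (U (n + 1)) (U n)

lemma imA1 (τ : ℝ) (hτ : τ ≠ 0) (z w : ℂ) :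
    (Complex.I * (z - w) / (τ:ℂ) * (starRingEnd ℂ) ((z + w)/2)).im
      = (Complex.normSq z - Complex.normSq w) / (2*τ) := by
  have hτ' : (τ:ℂ) ≠ 0 := by exact_mod_cast hτ
  simp [Complex.div_im, Complex.div_re, Complex.mul_im, Complex.mul_re, Complex.normSq_apply]
  field_simp
  ring

lemma im_real_mul_self (r : ℝ) (m : ℂ) : ((r:ℂ) * m * (starRingEnd ℂ) m).im = 0 := by
  rw [mul_assoc, Complex.mul_conj]
  simp

lemma imA3 (lam : ℝ) (z w : ℂ) :
    ((lam:ℂ) * psi1 z w * (starRingEnd ℂ) ((z + w)/2)).im = 0 := by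
  unfold psi1
  rw [show (lam:ℂ) * ((((‖z‖ ^ 2 + ‖w‖ ^ 2) / 2 : ℝ) : ℂ) * ((z + w) / 2))
      = ((lam * ((‖z‖ ^ 2 + ‖w‖ ^ 2) / 2) : ℝ) : ℂ) * ((z+w)/2) by
        push_cast; ring]
  exact im_real_mul_self _ _

lemma imA4 (ν : ℝ) (z w : ℂ) :
    (-((ν:ℂ) * psi2 z w) * (starRingEnd ℂ) ((z + w)/2)).im = 0 := by
  unfold psi2
  rw [show -((ν:ℂ) * ((((‖z‖ ^ 4 + ‖z‖ ^ 2 * ‖w‖ ^ 2 +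
        ‖w‖ ^ 4) / 3 : ℝ) : ℂ) * ((z + w) / 2)))
      = ((-(ν * ((‖z‖ ^ 4 + ‖z‖ ^ 2 * ‖w‖ ^ 2 +
        ‖w‖ ^ 4) / 3)) : ℝ) : ℂ) * ((z+w)/2) by push_cast; ring]
  exact im_real_mul_self _ _

lemma imA5 (ε : ℝ) (z w : ℂ) :
    (Complex.I * (ε:ℂ) * phi z w * (starRingEnd ℂ) ((z + w)/2)).im
      = ε * Complex.normSq ((z+w)/2) ^ 2 := by
  unfold phi
  set m := (z+w)/2 with hm
  rw [show Complex.I * (ε:ℂ) * (((‖m‖ ^ 2 : ℝ) : ℂ) * m) * (starRingEnd ℂ) m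
      = Complex.I * (((ε * ‖m‖ ^ 2 : ℝ) : ℂ) * (m * (starRingEnd ℂ) m)) by
        push_cast; ring]
  rw [Complex.mul_conj]
  rw [show (((ε * ‖m‖ ^ 2 : ℝ) : ℂ) * ((Complex.normSq m : ℝ):ℂ))
      = ((ε * ‖m‖ ^ 2 * Complex.normSq m : ℝ) : ℂ) by push_cast; ring]
  rw [show (Complex.I * ((ε * ‖m‖ ^ 2 * Complex.normSq m : ℝ) : ℂ)).im
      = ε * ‖m‖ ^ 2 * Complex.normSq m by
        simp only [Complex.mul_im, Complex.I_re, Complex.I_im, Complex.ofReal_re,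
          Complex.ofReal_im]; ring]
  rw [Complex.sq_norm]
  ring

lemma sum_shift (J : ℕ) (g : ℕ → ℂ) (h0 : g 0 = 0) (hJ : g J = 0) :
    ∑ j ∈ range J, g (j+1) = ∑ j ∈ range J, g j := by
  have h1 : ∑ j ∈ range (J+1), g j = ∑ j ∈ range J, g (j+1) + g 0 := Finset.sum_range_succ' g J
  have h2 : ∑ j ∈ range (J+1), g j = ∑ j ∈ range J, g j + g J := Finset.sum_range_succ g J
  rw [h0, add_zero] at h1
  rw [hJ, add_zero] at h2
  rw [← h1, h2]

lemma im_sbp (J : ℕ) (f : ℕ → ℂ) (h0 : f 0 = 0) (hJ : f J = 0) :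
    (∑ j ∈ range J, (f (j+1) - 2 * f j + f (j-1)) * (starRingEnd ℂ) (f j)).im = 0 := by
  have hsplit : ∑ j ∈ range J, (f (j+1) - 2 * f j + f (j-1)) * (starRingEnd ℂ) (f j)
      = ((∑ j ∈ range J, f (j+1) * (starRingEnd ℂ) (f j))
          + ∑ j ∈ range J, f (j-1) * (starRingEnd ℂ) (f j))
        - 2 * ∑ j ∈ range J, ((Complex.normSq (f j) : ℝ) : ℂ) := by
    rw [Finset.mul_sum, ← Finset.sum_add_distrib, ← Finset.sum_sub_distrib]
    apply Finset.sum_congr rfl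
    intro j _
    rw [← Complex.mul_conj]
    ring
  have hshift : ∑ j ∈ range J, f (j-1) * (starRingEnd ℂ) (f j)
      = (starRingEnd ℂ) (∑ j ∈ range J, f (j+1) * (starRingEnd ℂ) (f j)) := by
    calc ∑ j ∈ range J, f (j-1) * (starRingEnd ℂ) (f j)
        = ∑ j ∈ range J, f ((j+1)-1) * (starRingEnd ℂ) (f (j+1)) := by
          refine (sum_shift J (fun j => f (j-1) * (starRingEnd ℂ) (f j)) ?_ ?_).symm
          · simp [h0]
          · simp [hJ]
      _ = ∑ j ∈ range J, f j * (starRingEnd ℂ) (f (j+1)) := by simp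
      _ = (starRingEnd ℂ) (∑ j ∈ range J, f (j+1) * (starRingEnd ℂ) (f j)) := by
          rw [map_sum]
          apply Finset.sum_congr rfl
          intro j _
          rw [map_mul, Complex.conj_conj]
          ring
  rw [hsplit, hshift]
  simp [Complex.im_sum]
  rw [← Finset.sum_add_distrib]
  apply Finset.sum_eq_zero
  intros
  ring

lemma step_decrease (Δx Δy : ℝ) (J K : ℕ)
    (lam ν ε τ : ℝ) (hε : 0 ≤ ε) (hτ : 0 < τ)
    (W V : ℕ → ℕ → ℂ) (hW : memX J K W) (hV : memX J K V)
    (heq : stepEq Δx Δy J K lam ν ε τ W V) :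
    ∑ j ∈ range J, ∑ k ∈ range K, Complex.normSq (W j k)
      ≤ ∑ j ∈ range J, ∑ k ∈ range K, Complex.normSq (V j k) := by
  -- boundary facts for the average M j k = (W j k + V j k) / 2
  have hM0 : ∀ k, (W 0 k + V 0 k) / 2 = 0 := by intro k; rw [hW.1 k, hV.1 k]; ring
  have hMJ : ∀ k, (W J k + V J k) / 2 = 0 := by intro k; rw [hW.2.1 k, hV.2.1 k]; ring
  have hM0' : ∀ j, (W j 0 + V j 0) / 2 = 0 := by intro j; rw [hW.2.2.1 j, hV.2.2.1 j]; ring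
  have hMK : ∀ j, (W j K + V j K) / 2 = 0 := by intro j; rw [hW.2.2.2 j, hV.2.2.2 j]; ring
  -- the total weighted sum vanishes
  have hT : (∑ j ∈ range J, ∑ k ∈ range K,
      ((Complex.I * (W j k - V j k) / (τ:ℂ)) * (starRingEnd ℂ) ((W j k + V j k)/2)
       + delta2 Δx Δy (fun j' k' => (W j' k' + V j' k') / 2) j k *
           (starRingEnd ℂ) ((W j k + V j k)/2)
       + ((lam:ℂ) * psi1 (W j k) (V j k)) * (starRingEnd ℂ) ((W j k + V j k)/2)
       + (-((ν:ℂ) * psi2 (W j k) (V j k))) * (starRingEnd ℂ) ((W j k + V j k)/2)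
       + (Complex.I * (ε:ℂ) * phi (W j k) (V j k)) * (starRingEnd ℂ) ((W j k + V j k)/2)))
      = 0 := by
    apply Finset.sum_eq_zero
    intro j hj
    apply Finset.sum_eq_zero
    intro k hk
    rw [mem_range] at hj hk
    by_cases hj0 : j = 0
    · subst hj0
      rw [hM0 k]
      simp
    by_cases hk0 : k = 0
    · subst hk0
      rw [hM0' j]
      simp
    · have h := heq j k (by omega) (by omega) (by omega) (by omega)
      have hexp : (Complex.I * (W j k - V j k) / (τ:ℂ)) * (starRingEnd ℂ) ((W j k + V j k)/2)
       + delta2 Δx Δy (fun j' k' => (W j' k' + V j' k') / 2) j k *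
           (starRingEnd ℂ) ((W j k + V j k)/2)
       + ((lam:ℂ) * psi1 (W j k) (V j k)) * (starRingEnd ℂ) ((W j k + V j k)/2)
       + (-((ν:ℂ) * psi2 (W j k) (V j k))) * (starRingEnd ℂ) ((W j k + V j k)/2)
       + (Complex.I * (ε:ℂ) * phi (W j k) (V j k)) * (starRingEnd ℂ) ((W j k + V j k)/2)
       = (Complex.I * (W j k - V j k) / (τ : ℂ) +
          delta2 Δx Δy (fun j' k' => (W j' k' + V j' k') / 2) j k +
          (lam : ℂ) * psi1 (W j k) (V j k) - (ν : ℂ) * psi2 (W j k) (V j k) +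
          Complex.I * (ε : ℂ) * phi (W j k) (V j k)) * (starRingEnd ℂ) ((W j k + V j k)/2) := by
        ring
      rw [hexp, h, zero_mul]
  -- pass to imaginary parts
  have hIm := congrArg Complex.im hT
  rw [Complex.im_sum] at hIm
  simp only [Complex.im_sum, Complex.add_im] at hIm
  -- evaluate term 1, 3, 4, 5 pointwise
  have e1 : ∀ j k : ℕ, ((Complex.I * (W j k - V j k) / (τ:ℂ)) *
        (starRingEnd ℂ) ((W j k + V j k)/2)).im
      = (Complex.normSq (W j k) - Complex.normSq (V j k)) / (2*τ) :=
    fun j k => imA1 τ hτ.ne' (W j k) (V j k)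
  have e3 : ∀ j k : ℕ, (((lam:ℂ) * psi1 (W j k) (V j k)) *
        (starRingEnd ℂ) ((W j k + V j k)/2)).im = 0 := fun j k => imA3 lam _ _
  have e4 : ∀ j k : ℕ, ((-((ν:ℂ) * psi2 (W j k) (V j k))) *
        (starRingEnd ℂ) ((W j k + V j k)/2)).im = 0 := fun j k => imA4 ν _ _
  have e5 : ∀ j k : ℕ, ((Complex.I * (ε:ℂ) * phi (W j k) (V j k)) *
        (starRingEnd ℂ) ((W j k + V j k)/2)).im
      = ε * Complex.normSq ((W j k + V j k)/2) ^ 2 := fun j k => imA5 ε _ _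
  simp only [e1, e3, e4, e5, add_zero, zero_add] at hIm
  -- the Laplacian contribution vanishes
  have hx : ∀ k, (∑ j ∈ range J, ((W (j+1) k + V (j+1) k)/2 - 2 * ((W j k + V j k)/2)
        + (W (j-1) k + V (j-1) k)/2) * (starRingEnd ℂ) ((W j k + V j k)/2)).im = 0 :=
    fun k => im_sbp J (fun j => (W j k + V j k)/2) (hM0 k) (hMJ k)
  have hy : ∀ j, (∑ k ∈ range K, ((W j (k+1) + V j (k+1))/2 - 2 * ((W j k + V j k)/2)
        + (W j (k-1) + V j (k-1))/2) * (starRingEnd ℂ) ((W j k + V j k)/2)).im = 0 :=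
    fun j => im_sbp K (fun k => (W j k + V j k)/2) (hM0' j) (hMK j)
  have h2 : ∑ j ∈ range J, ∑ k ∈ range K,
      (delta2 Δx Δy (fun j' k' => (W j' k' + V j' k') / 2) j k *
        (starRingEnd ℂ) ((W j k + V j k)/2)).im = 0 := by
    have expand : ∀ j k : ℕ, (delta2 Δx Δy (fun j' k' => (W j' k' + V j' k') / 2) j k *
          (starRingEnd ℂ) ((W j k + V j k)/2)).im
        = (((W (j+1) k + V (j+1) k)/2 - 2 * ((W j k + V j k)/2)
            + (W (j-1) k + V (j-1) k)/2) * (starRingEnd ℂ) ((W j k + V j k)/2)).im / Δx^2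
          + (((W j (k+1) + V j (k+1))/2 - 2 * ((W j k + V j k)/2)
            + (W j (k-1) + V j (k-1))/2) * (starRingEnd ℂ) ((W j k + V j k)/2)).im / Δy^2 := by
      intro j k
      show ((((W (j+1) k + V (j+1) k)/2 - 2 * ((W j k + V j k)/2)
            + (W (j-1) k + V (j-1) k)/2) / (Δx:ℂ)^2
          + ((W j (k+1) + V j (k+1))/2 - 2 * ((W j k + V j k)/2)
            + (W j (k-1) + V j (k-1))/2) / (Δy:ℂ)^2) *
          (starRingEnd ℂ) ((W j k + V j k)/2)).im = _
      rw [add_mul, Complex.add_im, div_mul_eq_mul_div, div_mul_eq_mul_div,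
        ← Complex.ofReal_pow, ← Complex.ofReal_pow, Complex.div_ofReal_im,
        Complex.div_ofReal_im]
    simp only [expand]
    rw [show (∑ j ∈ range J, ∑ k ∈ range K, ((((W (j+1) k + V (j+1) k)/2
          - 2 * ((W j k + V j k)/2) + (W (j-1) k + V (j-1) k)/2) *
          (starRingEnd ℂ) ((W j k + V j k)/2)).im / Δx^2
        + (((W j (k+1) + V j (k+1))/2 - 2 * ((W j k + V j k)/2)
          + (W j (k-1) + V j (k-1))/2) * (starRingEnd ℂ) ((W j k + V j k)/2)).im / Δy^2))
      = (∑ j ∈ range J, ∑ k ∈ range K, (((W (j+1) k + V (j+1) k)/2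
          - 2 * ((W j k + V j k)/2) + (W (j-1) k + V (j-1) k)/2) *
          (starRingEnd ℂ) ((W j k + V j k)/2)).im / Δx^2)
        + (∑ j ∈ range J, ∑ k ∈ range K, (((W j (k+1) + V j (k+1))/2
          - 2 * ((W j k + V j k)/2) + (W j (k-1) + V j (k-1))/2) *
          (starRingEnd ℂ) ((W j k + V j k)/2)).im / Δy^2) by
        rw [← Finset.sum_add_distrib]
        apply Finset.sum_congr rfl
        intro j _
        rw [← Finset.sum_add_distrib]]
    have hxz : (∑ j ∈ range J, ∑ k ∈ range K, (((W (j+1) k + V (j+1) k)/2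
          - 2 * ((W j k + V j k)/2) + (W (j-1) k + V (j-1) k)/2) *
          (starRingEnd ℂ) ((W j k + V j k)/2)).im / Δx^2) = 0 := by
      rw [Finset.sum_comm]
      apply Finset.sum_eq_zero
      intro k _
      rw [← Finset.sum_div, ← Complex.im_sum, hx k, zero_div]
    have hyz : (∑ j ∈ range J, ∑ k ∈ range K, (((W j (k+1) + V j (k+1))/2
          - 2 * ((W j k + V j k)/2) + (W j (k-1) + V j (k-1))/2) *
          (starRingEnd ℂ) ((W j k + V j k)/2)).im / Δy^2) = 0 := by
      apply Finset.sum_eq_zero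
      intro j _
      rw [← Finset.sum_div, ← Complex.im_sum, hy j, zero_div]
    rw [hxz, hyz, add_zero]
  -- separate the three remaining double sums
  rw [show (∑ j ∈ range J, ∑ k ∈ range K,
      ((Complex.normSq (W j k) - Complex.normSq (V j k)) / (2*τ)
        + (delta2 Δx Δy (fun j' k' => (W j' k' + V j' k') / 2) j k *
            (starRingEnd ℂ) ((W j k + V j k)/2)).im
        + ε * Complex.normSq ((W j k + V j k)/2) ^ 2))
    = (∑ j ∈ range J, ∑ k ∈ range K,
        (Complex.normSq (W j k) - Complex.normSq (V j k)) / (2*τ))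
      + (∑ j ∈ range J, ∑ k ∈ range K,
          (delta2 Δx Δy (fun j' k' => (W j' k' + V j' k') / 2) j k *
            (starRingEnd ℂ) ((W j k + V j k)/2)).im)
      + (∑ j ∈ range J, ∑ k ∈ range K,
          ε * Complex.normSq ((W j k + V j k)/2) ^ 2) by
      rw [← Finset.sum_add_distrib, ← Finset.sum_add_distrib]
      apply Finset.sum_congr rfl
      intro j _
      rw [← Finset.sum_add_distrib, ← Finset.sum_add_distrib]] at hIm
  rw [h2, add_zero] at hIm
  have hsub : (∑ j ∈ range J, ∑ k ∈ range K,
      (Complex.normSq (W j k) - Complex.normSq (V j k)) / (2*τ))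
      = ((∑ j ∈ range J, ∑ k ∈ range K, Complex.normSq (W j k))
        - ∑ j ∈ range J, ∑ k ∈ range K, Complex.normSq (V j k)) / (2*τ) := by
    rw [← Finset.sum_sub_distrib, Finset.sum_div]
    apply Finset.sum_congr rfl
    intro j _
    rw [← Finset.sum_sub_distrib, Finset.sum_div]
  rw [hsub] at hIm
  have hnn : 0 ≤ ∑ j ∈ range J, ∑ k ∈ range K, ε * Complex.normSq ((W j k + V j k)/2) ^ 2 := by
    apply Finset.sum_nonneg
    intro j _
    apply Finset.sum_nonneg
    intro k _
    positivity
  have h2τ : 0 < 2 * τ := by linarith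
  rw [Complex.zero_im] at hIm
  have h5 : ((∑ j ∈ range J, ∑ k ∈ range K, Complex.normSq (W j k))
      - ∑ j ∈ range J, ∑ k ∈ range K, Complex.normSq (V j k)) / (2*τ)
      = -∑ j ∈ range J, ∑ k ∈ range K, ε * Complex.normSq ((W j k + V j k)/2) ^ 2 := by
    linarith
  have h4 := (div_eq_iff h2τ.ne').mp h5
  nlinarith [mul_nonneg hnn h2τ.le]

/-- boundedness of the discrete solution in the discrete L²-norm. -/
theorem stmt5 (J K : ℕ) (hJ : 2 ≤ J) (hK : 2 ≤ K) (a b c d : ℝ) (hab : a < b) (hcd : c < d)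
    (Δx Δy : ℝ) (hΔx : Δx = (b - a) / J) (hΔy : Δy = (d - c) / K)
    (lam ν ε τ : ℝ) (hν : 0 < ν) (hε : 0 ≤ ε) (hτ : 0 < τ)
    (N : ℕ) (U : ℕ → ℕ → ℕ → ℂ) (hU : isCNFD Δx Δy J K lam ν ε τ N U)
    (n : ℕ) (hn : 1 ≤ n) (hn' : n ≤ N) :
    normP Δx Δy J K 2 (U n) ≤ normP Δx Δy J K 2 (U 0) := by
  obtain ⟨hmem, hstep⟩ := hU
  have hJ0 : (0:ℝ) < (J:ℝ) := by exact_mod_cast Nat.lt_of_lt_of_le (by norm_num) hJ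
  have hK0 : (0:ℝ) < (K:ℝ) := by exact_mod_cast Nat.lt_of_lt_of_le (by norm_num) hK
  have hxy : 0 ≤ Δx * Δy := by
    rw [hΔx, hΔy]
    have h1 : 0 < b - a := sub_pos.mpr hab
    have h2 : 0 < d - c := sub_pos.mpr hcd
    positivity
  have main : ∀ m, m ≤ N → ∑ j ∈ range J, ∑ k ∈ range K, Complex.normSq (U m j k)
      ≤ ∑ j ∈ range J, ∑ k ∈ range K, Complex.normSq (U 0 j k) := by
    intro m
    induction m with
    | zero => intro _; exact le_refl _
    | succ m ih =>
        intro h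
        exact le_trans
          (step_decrease Δx Δy J K lam ν ε τ hε hτ (U (m+1)) (U m)
            (hmem _ h) (hmem _ (by omega)) (hstep m (by omega)))
          (ih (by omega))
  unfold normP
  simp only [Complex.sq_norm]
  exact mul_le_mul_of_nonneg_left (main n hn') hxy
end
end

section
/- Let {Uⁿ}_{n=0}^N be a CNFD solution and 0 ≤ n ≤ N−1. Then E_h(U^{n+1}) − E_h(Uⁿ) ≤ (λ²ετ/(2ν)) · ‖U^{n+1/2}‖⁴_{4,h}, where U^{n+1/2} = (U^{n+1} + Uⁿ)/2. -/
noncomputable section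

open Finset Complex ComplexConjugate

section Aux

open Finset Complex ComplexConjugate

private lemma cn_abs_pow4 (z : ℂ) : ‖z‖ ^ 4 = Complex.normSq z ^ 2 := by
  rw [show (4:ℕ) = 2*2 from rfl, pow_mul, Complex.sq_norm]

private lemma cn_abs_pow6 (z : ℂ) : ‖z‖ ^ 6 = Complex.normSq z ^ 3 := by
  rw [show (6:ℕ) = 2*3 from rfl, pow_mul, Complex.sq_norm]

private lemma cn_sbp1 (J : ℕ) (f g : ℕ → ℂ) (hgJ : g J = 0) :
    ∑ j ∈ range J, (f (j+1) - 2*f j + f (j-1)) * conj (g j)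
      = -∑ j ∈ range J, (f (j+1) - f j) * conj (g (j+1) - g j) := by
  have htel := Finset.sum_range_sub (fun j => (f j - f (j-1)) * conj (g j)) J
  simp only [Nat.add_sub_cancel] at htel
  rw [hgJ] at htel
  simp only [map_zero, mul_zero, Nat.zero_sub, sub_self, zero_mul, zero_sub, sub_zero,
    neg_zero] at htel
  have hpt : ∀ j ∈ range J, (f (j+1) - 2*f j + f (j-1)) * conj (g j)
      = ((f (j+1) - f j) * conj (g (j+1)) - (f j - f (j-1)) * conj (g j))
        - (f (j+1) - f j) * conj (g (j+1) - g j) := by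
    intro j _
    cases j with
    | zero => simp only [Nat.zero_sub, map_sub]; ring
    | succ m => simp only [Nat.add_sub_cancel, map_sub]; ring
  rw [Finset.sum_congr rfl hpt, Finset.sum_sub_distrib, htel, zero_sub]

private lemma cn_sbp2 (Δx Δy : ℝ) (J K : ℕ) (M g : ℕ → ℕ → ℂ)
    (hgJ : ∀ k, g J k = 0) (hgK : ∀ j, g j K = 0) :
    ∑ j ∈ range J, ∑ k ∈ range K, delta2 Δx Δy M j k * conj (g j k)
      = -((∑ j ∈ range J, ∑ k ∈ range K,
            (M (j+1) k - M j k) * conj (g (j+1) k - g j k)) / (Δx:ℂ)^2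
        + (∑ j ∈ range J, ∑ k ∈ range K,
            (M j (k+1) - M j k) * conj (g j (k+1) - g j k)) / (Δy:ℂ)^2) := by
  have hx : ∑ j ∈ range J, ∑ k ∈ range K, (M (j+1) k - 2*M j k + M (j-1) k) * conj (g j k)
      = -∑ j ∈ range J, ∑ k ∈ range K, (M (j+1) k - M j k) * conj (g (j+1) k - g j k) := by
    rw [Finset.sum_comm (s := range J) (t := range K)]
    rw [show (∑ j ∈ range J, ∑ k ∈ range K, (M (j+1) k - M j k) * conj (g (j+1) k - g j k))
        = ∑ k ∈ range K, ∑ j ∈ range J, (M (j+1) k - M j k) * conj (g (j+1) k - g j k)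
        from Finset.sum_comm]
    rw [← Finset.sum_neg_distrib]
    exact Finset.sum_congr rfl fun k _ =>
      cn_sbp1 J (fun j => M j k) (fun j => g j k) (hgJ k)
  have hy : ∑ j ∈ range J, ∑ k ∈ range K, (M j (k+1) - 2*M j k + M j (k-1)) * conj (g j k)
      = -∑ j ∈ range J, ∑ k ∈ range K, (M j (k+1) - M j k) * conj (g j (k+1) - g j k) := by
    rw [← Finset.sum_neg_distrib]
    exact Finset.sum_congr rfl fun j _ =>
      cn_sbp1 K (fun k => M j k) (fun k => g j k) (hgK j)
  rw [Finset.sum_congr rfl fun j (_ : j ∈ range J) => Finset.sum_congr rfl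
    fun k (_ : k ∈ range K) => show delta2 Δx Δy M j k * conj (g j k)
      = ((M (j+1) k - 2*M j k + M (j-1) k) * conj (g j k)) / (Δx:ℂ)^2
        + ((M j (k+1) - 2*M j k + M j (k-1)) * conj (g j k)) / (Δy:ℂ)^2 by
      unfold delta2; ring]
  simp only [Finset.sum_add_distrib, ← Finset.sum_div]
  rw [hx, hy]
  ring

private lemma cn_l1 (z₁ z₀ w₁ w₀ : ℂ) :
    Complex.normSq (z₁ - z₀) - Complex.normSq (w₁ - w₀)
      = 2 * ((((z₁ + w₁)/2 - (z₀ + w₀)/2)) * conj ((z₁ - w₁) - (z₀ - w₀))).re := by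
  simp only [Complex.mul_re, Complex.mul_im, Complex.add_re, Complex.add_im, Complex.sub_re,
    Complex.sub_im, Complex.neg_re, Complex.neg_im, Complex.div_re, Complex.div_im,
    Complex.I_re, Complex.I_im, Complex.conj_re, Complex.conj_im, Complex.ofReal_re,
    Complex.ofReal_im, Complex.normSq_apply, Complex.re_ofNat, Complex.im_ofNat,
    Complex.normSq_ofNat]
  ring

private lemma cn_l2 (z w : ℂ) (lam ν ε τ : ℝ) (hτ : τ ≠ 0) :
    ((-(Complex.I * (z - w) / (τ:ℂ) + (lam:ℂ) * psi1 z w - (ν:ℂ) * psi2 z w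
        + Complex.I * (ε:ℂ) * phi z w)) * conj (z - w)).re
      = -(lam * (‖z‖ ^ 4 - ‖w‖ ^ 4) / 4
          - ν * (‖z‖ ^ 6 - ‖w‖ ^ 6) / 6
          + ε * Complex.normSq ((z+w)/2) * (z * conj w).im) := by
  simp only [psi1, psi2, phi, cn_abs_pow4, cn_abs_pow6, Complex.sq_norm]
  simp only [Complex.mul_re, Complex.mul_im, Complex.add_re, Complex.add_im, Complex.sub_re,
    Complex.sub_im, Complex.neg_re, Complex.neg_im, Complex.div_re, Complex.div_im,
    Complex.I_re, Complex.I_im, Complex.conj_re, Complex.conj_im, Complex.ofReal_re,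
    Complex.ofReal_im, Complex.normSq_apply, Complex.re_ofNat, Complex.im_ofNat,
    Complex.normSq_ofNat]
  field_simp
  ring

set_option maxHeartbeats 2000000 in
private lemma cn_l3 (z w : ℂ) (lam ν ε τ : ℝ) (hτ : τ ≠ 0) :
    Complex.normSq ((z+w)/2) * (z * conj w).im
      = τ * ((-(Complex.I * (z - w) / (τ:ℂ) + (lam:ℂ) * psi1 z w - (ν:ℂ) * psi2 z w
            + Complex.I * (ε:ℂ) * phi z w))
          * conj ((Complex.normSq ((z+w)/2) : ℂ) * ((z+w)/2))).re
        + τ * ((lam * ((‖z‖ ^ 2 + ‖w‖ ^ 2)/2)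
            - ν * ((‖z‖ ^ 4 + ‖z‖ ^ 2 * ‖w‖ ^ 2
                + ‖w‖ ^ 4)/3))
            * Complex.normSq ((z+w)/2) ^ 2) := by
  rw [map_mul, Complex.conj_ofReal]
  simp only [psi1, psi2, phi, cn_abs_pow4, cn_abs_pow6, Complex.sq_norm]
  simp only [Complex.mul_re, Complex.mul_im, Complex.add_re, Complex.add_im, Complex.sub_re,
    Complex.sub_im, Complex.neg_re, Complex.neg_im, Complex.div_re, Complex.div_im,
    Complex.I_re, Complex.I_im, Complex.conj_re, Complex.conj_im, Complex.ofReal_re,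
    Complex.ofReal_im, Complex.normSq_apply, Complex.re_ofNat, Complex.im_ofNat,
    Complex.normSq_ofNat]
  field_simp
  ring

private lemma cn_l4 (a b : ℂ) :
    0 ≤ ((a - b) * conj ((Complex.normSq a : ℂ) * a - (Complex.normSq b : ℂ) * b)).re := by
  simp only [Complex.mul_re, Complex.mul_im, Complex.add_re, Complex.add_im, Complex.sub_re,
    Complex.sub_im, Complex.neg_re, Complex.neg_im, Complex.conj_re, Complex.conj_im,
    Complex.ofReal_re, Complex.ofReal_im, Complex.normSq_apply]
  nlinarith [sq_nonneg (a.re^2 + a.im^2 - b.re^2 - b.im^2), sq_nonneg (a.re - b.re),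
    sq_nonneg (a.im - b.im), sq_nonneg (a.re*b.im - a.im*b.re), sq_nonneg a.re, sq_nonneg a.im,
    sq_nonneg b.re, sq_nonneg b.im,
    mul_nonneg (add_nonneg (add_nonneg (add_nonneg (sq_nonneg a.re) (sq_nonneg a.im))
        (sq_nonneg b.re)) (sq_nonneg b.im))
      (add_nonneg (sq_nonneg (a.re - b.re)) (sq_nonneg (a.im - b.im)))]

private lemma cn_l5 (p q lam ν : ℝ) (hν : 0 < ν) :
    lam * ((p^2 + q^2)/2) - ν * ((p^4 + p^2*q^2 + q^4)/3) ≤ lam^2/(4*ν) := by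
  rw [le_div_iff₀ (by positivity : (0:ℝ) < 4*ν)]
  nlinarith [sq_nonneg (lam - ν*(p^2+q^2)), mul_nonneg hν.le (sq_nonneg (p^2 - q^2))]

private lemma cn_gradexp (Δx Δy : ℝ) (J K : ℕ) (u : ℕ → ℕ → ℂ) :
    gradSq Δx Δy J K u = Δx * Δy * ∑ j ∈ range J, ∑ k ∈ range K,
      (Complex.normSq (u (j+1) k - u j k) / Δx^2
        + Complex.normSq (u j (k+1) - u j k) / Δy^2) := by
  unfold gradSq
  refine congrArg _ (Finset.sum_congr rfl fun j _ => Finset.sum_congr rfl fun k _ => ?_)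
  simp only [norm_div, div_pow, Complex.sq_norm, Complex.norm_real, Real.norm_eq_abs, _root_.sq_abs]

end Aux

/-- one-step discrete energy estimate. -/
theorem stmt9 (J K : ℕ) (hJ : 2 ≤ J) (hK : 2 ≤ K) (a b c d : ℝ) (hab : a < b) (hcd : c < d)
    (Δx Δy : ℝ) (hΔx : Δx = (b - a) / J) (hΔy : Δy = (d - c) / K)
    (lam ν ε τ : ℝ) (hν : 0 < ν) (hε : 0 ≤ ε) (hτ : 0 < τ)
    (N : ℕ) (U : ℕ → ℕ → ℕ → ℂ) (hU : isCNFD Δx Δy J K lam ν ε τ N U)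
    (n : ℕ) (hn : n < N) :
    energy Δx Δy J K lam ν (U (n + 1)) - energy Δx Δy J K lam ν (U n) ≤
      lam ^ 2 * ε * τ / (2 * ν) *
        normP Δx Δy J K 4 (fun j k => (U (n + 1) j k + U n j k) / 2) := by
  obtain ⟨hmem, hstep⟩ := hU
  have heq := hstep n hn
  obtain ⟨hW0, hWJ, hWy0, hWyK⟩ := hmem (n+1) (by omega : n+1 ≤ N)
  obtain ⟨hV0, hVJ, hVy0, hVyK⟩ := hmem n (by omega : n ≤ N)
  set W : ℕ → ℕ → ℂ := U (n+1) with hWdef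
  set V : ℕ → ℕ → ℂ := U n with hVdef
  unfold stepEq at heq
  set M : ℕ → ℕ → ℂ := fun j k => (W j k + V j k) / 2 with hMdef
  set D : ℕ → ℕ → ℂ := fun j k => W j k - V j k with hDdef
  set G : ℕ → ℕ → ℂ := fun j k => ((Complex.normSq (M j k) : ℝ) : ℂ) * M j k with hGdef
  have hJ0 : (0:ℝ) < (J:ℝ) := by
    have : 0 < J := by omega
    exact_mod_cast this
  have hK0 : (0:ℝ) < (K:ℝ) := by
    have : 0 < K := by omega
    exact_mod_cast this
  have hΔx0 : 0 < Δx := by rw [hΔx]; exact div_pos (by linarith) hJ0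
  have hΔy0 : 0 < Δy := by rw [hΔy]; exact div_pos (by linarith) hK0
  have hτ0 : (τ:ℝ) ≠ 0 := ne_of_gt hτ
  -- boundary values
  have hDJ : ∀ k, D J k = 0 := fun k => by simp [hDdef, hWJ k, hVJ k]
  have hDK : ∀ j, D j K = 0 := fun j => by simp [hDdef, hWyK j, hVyK j]
  have hMJ : ∀ k, M J k = 0 := fun k => by simp [hMdef, hWJ k, hVJ k]
  have hMK : ∀ j, M j K = 0 := fun j => by simp [hMdef, hWyK j, hVyK j]
  have hM0 : ∀ k, M 0 k = 0 := fun k => by simp [hMdef, hW0 k, hV0 k]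
  have hMy0 : ∀ j, M j 0 = 0 := fun j => by simp [hMdef, hWy0 j, hVy0 j]
  have hGJ : ∀ k, G J k = 0 := fun k => by simp [hGdef, hMJ k]
  have hGK : ∀ j, G j K = 0 := fun j => by simp [hGdef, hMK j]
  -- interior: solve the scheme for the discrete Laplacian
  have hdelta : ∀ j k, 1 ≤ j → j ≤ J - 1 → 1 ≤ k → k ≤ K - 1 →
      delta2 Δx Δy M j k
        = -(Complex.I * (W j k - V j k) / (τ:ℂ) + (lam:ℂ) * psi1 (W j k) (V j k)
            - (ν:ℂ) * psi2 (W j k) (V j k) + Complex.I * (ε:ℂ) * phi (W j k) (V j k)) := by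
    intro j k h1 h2 h3 h4
    have e := heq j k h1 h2 h3 h4
    linear_combination e
  -- pointwise real part identity against conj D
  have hpt : ∀ j ∈ range J, ∀ k ∈ range K,
      (delta2 Δx Δy M j k * conj (D j k)).re
        = -(lam * (‖W j k‖ ^ 4 - ‖V j k‖ ^ 4) / 4
            - ν * (‖W j k‖ ^ 6 - ‖V j k‖ ^ 6) / 6
            + ε * (Complex.normSq (M j k) * (W j k * conj (V j k)).im)) := by
    intro j hj k hk
    by_cases h1 : 1 ≤ j
    · by_cases h3 : 1 ≤ k
      · have h2 : j ≤ J - 1 := by have := mem_range.mp hj; omega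
        have h4 : k ≤ K - 1 := by have := mem_range.mp hk; omega
        rw [hdelta j k h1 h2 h3 h4]
        simp only [hDdef, hMdef]
        linear_combination cn_l2 (W j k) (V j k) lam ν ε τ hτ0
      · have hk0 : k = 0 := by omega
        subst hk0
        simp [hDdef, hMdef, hWy0 j, hVy0 j]
    · have hj0 : j = 0 := by omega
      subst hj0
      simp [hDdef, hMdef, hW0 k, hV0 k]
  -- gradient difference via first differences
  have hgrad : gradSq Δx Δy J K W - gradSq Δx Δy J K V
      = Δx * Δy * ∑ j ∈ range J, ∑ k ∈ range K,
          (2 * (((M (j+1) k - M j k) * conj (D (j+1) k - D j k)).re / Δx^2)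
            + 2 * (((M j (k+1) - M j k) * conj (D j (k+1) - D j k)).re / Δy^2)) := by
    rw [cn_gradexp Δx Δy J K W, cn_gradexp Δx Δy J K V, ← mul_sub]
    congr 1
    rw [← Finset.sum_sub_distrib]
    refine Finset.sum_congr rfl fun j _ => ?_
    rw [← Finset.sum_sub_distrib]
    refine Finset.sum_congr rfl fun k _ => ?_
    simp only [hMdef, hDdef]
    have e1 := cn_l1 (W (j+1) k) (W j k) (V (j+1) k) (V j k)
    have e2 := cn_l1 (W j (k+1)) (W j k) (V j (k+1)) (V j k)
    linear_combination e1 / Δx^2 + e2 / Δy^2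
  -- summation by parts against D
  have hsum1 : ∑ j ∈ range J, ∑ k ∈ range K,
      (2 * (((M (j+1) k - M j k) * conj (D (j+1) k - D j k)).re / Δx^2)
        + 2 * (((M j (k+1) - M j k) * conj (D j (k+1) - D j k)).re / Δy^2))
      = -2 * ∑ j ∈ range J, ∑ k ∈ range K, (delta2 Δx Δy M j k * conj (D j k)).re := by
    have hre : ∑ j ∈ range J, ∑ k ∈ range K, (delta2 Δx Δy M j k * conj (D j k)).re
        = (∑ j ∈ range J, ∑ k ∈ range K, delta2 Δx Δy M j k * conj (D j k)).re := by
      simp only [Complex.re_sum]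
    rw [hre, cn_sbp2 Δx Δy J K M D hDJ hDK,
      show ((Δx:ℂ)^2) = ((Δx^2 : ℝ) : ℂ) by push_cast; ring,
      show ((Δy:ℂ)^2) = ((Δy^2 : ℝ) : ℂ) by push_cast; ring]
    simp only [Complex.neg_re, Complex.add_re, Complex.div_ofReal_re, Complex.re_sum]
    simp only [Finset.sum_add_distrib, ← Finset.sum_div, ← Finset.mul_sum]
    ring
  -- energy-type gradient identity
  have hgrad2 : gradSq Δx Δy J K W - gradSq Δx Δy J K V
      = Δx * Δy * (2 * ∑ j ∈ range J, ∑ k ∈ range K,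
          (lam * (‖W j k‖ ^ 4 - ‖V j k‖ ^ 4) / 4
            - ν * (‖W j k‖ ^ 6 - ‖V j k‖ ^ 6) / 6
            + ε * (Complex.normSq (M j k) * (W j k * conj (V j k)).im))) := by
    rw [hgrad, hsum1,
      Finset.sum_congr rfl fun j hj => Finset.sum_congr rfl fun k hk => hpt j hj k hk]
    simp only [Finset.sum_neg_distrib]
    ring
  -- normP differences
  have hP4 : normP Δx Δy J K 4 W - normP Δx Δy J K 4 V
      = Δx * Δy * ∑ j ∈ range J, ∑ k ∈ range K,
          (‖W j k‖ ^ 4 - ‖V j k‖ ^ 4) := by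
    unfold normP
    rw [← mul_sub]
    simp only [← Finset.sum_sub_distrib]
  have hP6 : normP Δx Δy J K 6 W - normP Δx Δy J K 6 V
      = Δx * Δy * ∑ j ∈ range J, ∑ k ∈ range K,
          (‖W j k‖ ^ 6 - ‖V j k‖ ^ 6) := by
    unfold normP
    rw [← mul_sub]
    simp only [← Finset.sum_sub_distrib]
  have hP4M : normP Δx Δy J K 4 M
      = Δx * Δy * ∑ j ∈ range J, ∑ k ∈ range K, Complex.normSq (M j k) ^ 2 := by
    unfold normP
    simp only [cn_abs_pow4]
  -- energy identity
  have hE : energy Δx Δy J K lam ν W - energy Δx Δy J K lam ν V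
      = 2 * ε * (Δx * Δy) * ∑ j ∈ range J, ∑ k ∈ range K,
          Complex.normSq (M j k) * (W j k * conj (V j k)).im := by
    have expand : energy Δx Δy J K lam ν W - energy Δx Δy J K lam ν V
        = (gradSq Δx Δy J K W - gradSq Δx Δy J K V)
          - lam / 2 * (normP Δx Δy J K 4 W - normP Δx Δy J K 4 V)
          + ν / 3 * (normP Δx Δy J K 6 W - normP Δx Δy J K 6 V) := by
      unfold energy; ring
    rw [expand, hgrad2, hP4, hP6]
    simp only [Finset.sum_add_distrib, Finset.sum_sub_distrib, ← Finset.sum_div,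
      ← Finset.mul_sum]
    ring
  -- pointwise identity against conj G
  have hptG : ∀ j ∈ range J, ∀ k ∈ range K,
      Complex.normSq (M j k) * (W j k * conj (V j k)).im
        = τ * (delta2 Δx Δy M j k * conj (G j k)).re
          + τ * ((lam * ((‖W j k‖ ^ 2 + ‖V j k‖ ^ 2)/2)
              - ν * ((‖W j k‖ ^ 4
                  + ‖W j k‖ ^ 2 * ‖V j k‖ ^ 2
                  + ‖V j k‖ ^ 4)/3)) * Complex.normSq (M j k) ^ 2) := by
    intro j hj k hk
    by_cases h1 : 1 ≤ j
    · by_cases h3 : 1 ≤ k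
      · have h2 : j ≤ J - 1 := by have := mem_range.mp hj; omega
        have h4 : k ≤ K - 1 := by have := mem_range.mp hk; omega
        rw [hdelta j k h1 h2 h3 h4]
        simp only [hGdef, hMdef]
        linear_combination cn_l3 (W j k) (V j k) lam ν ε τ hτ0
      · have hk0 : k = 0 := by omega
        subst hk0
        simp [hGdef, hMy0 j]
    · have hj0 : j = 0 := by omega
      subst hj0
      simp [hGdef, hM0 k]
  have hSI : ∑ j ∈ range J, ∑ k ∈ range K,
        Complex.normSq (M j k) * (W j k * conj (V j k)).im
      = τ * (∑ j ∈ range J, ∑ k ∈ range K, (delta2 Δx Δy M j k * conj (G j k)).re)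
        + τ * ∑ j ∈ range J, ∑ k ∈ range K,
            ((lam * ((‖W j k‖ ^ 2 + ‖V j k‖ ^ 2)/2)
              - ν * ((‖W j k‖ ^ 4
                  + ‖W j k‖ ^ 2 * ‖V j k‖ ^ 2
                  + ‖V j k‖ ^ 4)/3)) * Complex.normSq (M j k) ^ 2) := by
    rw [Finset.sum_congr rfl fun j hj => Finset.sum_congr rfl fun k hk => hptG j hj k hk]
    simp only [Finset.sum_add_distrib, ← Finset.mul_sum]
  -- the Laplacian term is dissipative
  have hSd : ∑ j ∈ range J, ∑ k ∈ range K, (delta2 Δx Δy M j k * conj (G j k)).re ≤ 0 := by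
    have hre : ∑ j ∈ range J, ∑ k ∈ range K, (delta2 Δx Δy M j k * conj (G j k)).re
        = (∑ j ∈ range J, ∑ k ∈ range K, delta2 Δx Δy M j k * conj (G j k)).re := by
      simp only [Complex.re_sum]
    rw [hre, cn_sbp2 Δx Δy J K M G hGJ hGK,
      show ((Δx:ℂ)^2) = ((Δx^2 : ℝ) : ℂ) by push_cast; ring,
      show ((Δy:ℂ)^2) = ((Δy^2 : ℝ) : ℂ) by push_cast; ring]
    simp only [Complex.neg_re, Complex.add_re, Complex.div_ofReal_re, Complex.re_sum]
    have hx : 0 ≤ ∑ j ∈ range J, ∑ k ∈ range K,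
        ((M (j+1) k - M j k) * conj (G (j+1) k - G j k)).re := by
      refine Finset.sum_nonneg fun j _ => Finset.sum_nonneg fun k _ => ?_
      simp only [hGdef]
      exact cn_l4 (M (j+1) k) (M j k)
    have hy : 0 ≤ ∑ j ∈ range J, ∑ k ∈ range K,
        ((M j (k+1) - M j k) * conj (G j (k+1) - G j k)).re := by
      refine Finset.sum_nonneg fun j _ => Finset.sum_nonneg fun k _ => ?_
      simp only [hGdef]
      exact cn_l4 (M j (k+1)) (M j k)
    have h1 := div_nonneg hx (sq_nonneg Δx)
    have h2 := div_nonneg hy (sq_nonneg Δy)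
    linarith
  -- bound on the reaction term
  have hSc : ∑ j ∈ range J, ∑ k ∈ range K,
        ((lam * ((‖W j k‖ ^ 2 + ‖V j k‖ ^ 2)/2)
          - ν * ((‖W j k‖ ^ 4
              + ‖W j k‖ ^ 2 * ‖V j k‖ ^ 2
              + ‖V j k‖ ^ 4)/3)) * Complex.normSq (M j k) ^ 2)
      ≤ lam^2/(4*ν) * ∑ j ∈ range J, ∑ k ∈ range K, Complex.normSq (M j k) ^ 2 := by
    rw [Finset.mul_sum]
    refine Finset.sum_le_sum fun j _ => ?_
    rw [Finset.mul_sum]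
    refine Finset.sum_le_sum fun k _ => ?_
    exact mul_le_mul_of_nonneg_right
      (cn_l5 (‖W j k‖) (‖V j k‖) lam ν hν) (sq_nonneg _)
  -- conclude
  have key : ∀ Sd Sc S4 : ℝ, Sd ≤ 0 → Sc ≤ lam^2/(4*ν) * S4 →
      2 * ε * (Δx * Δy) * (τ * Sd + τ * Sc)
        ≤ lam ^ 2 * ε * τ / (2 * ν) * (Δx * Δy * S4) := by
    intro Sd Sc S4 h1 h2
    have e1 : τ * Sd ≤ 0 := by
      have := mul_le_mul_of_nonneg_left h1 hτ.le
      simpa using this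
    have e2 : τ * Sc ≤ τ * (lam^2/(4*ν) * S4) := mul_le_mul_of_nonneg_left h2 hτ.le
    have e3 : (0:ℝ) ≤ 2 * ε * (Δx * Δy) := by positivity
    have e4 : 2 * ε * (Δx * Δy) * (τ * Sd + τ * Sc)
        ≤ 2 * ε * (Δx * Δy) * (τ * (lam^2/(4*ν) * S4)) :=
      mul_le_mul_of_nonneg_left (by linarith) e3
    have e5 : 2 * ε * (Δx * Δy) * (τ * (lam^2/(4*ν) * S4))
        = lam ^ 2 * ε * τ / (2 * ν) * (Δx * Δy * S4) := by
      field_simp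
      ring
    linarith
  rw [hE, hSI, hP4M]
  exact key _ _ _ hSd hSc
end
end
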